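/- For every prime p, the p-adic topology on ℤ is not the Mackey topology: there exists a strictly finer metrizable locally quasi-convex group topology τ on ℤ with the same continuous characters into ℝ/ℤ, namely the characters k ↦ (a k / p^n) + ℤ (a ∈ ℤ, n ∈ ℕ), whose images generate the Prüfer group ℤ(p^∞). -/

import Mathlib

open Filter Topology

noncomputable def gg (r : ℝ) : ℝ := |r - round r|

lemma gg_nonneg (r : ℝ) : 0 ≤ gg r := abs_nonneg _
lemma gg_le_half (r : ℝ) : gg r ≤ 1/2 := by
  unfold gg; simpa [one_div] using abs_sub_round r

lemma gg_le (r : ℝ) (z : ℤ) : gg r ≤ |r - z| := by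
  rcases eq_or_ne z (round r) with rfl | hz
  · exact le_of_eq rfl
  · have h1 : (1:ℝ) ≤ |(z:ℝ) - round r| := by
      have : z - round r ≠ 0 := sub_ne_zero.mpr (by exact_mod_cast hz)
      have : (1:ℤ) ≤ |z - round r| := Int.one_le_abs this
      calc (1:ℝ) = ((1:ℤ):ℝ) := by norm_num
        _ ≤ ((|z - round r| : ℤ) : ℝ) := by exact_mod_cast this
        _ = |(z:ℝ) - round r| := by push_cast; ring
    have h2 : |(z:ℝ) - round r| ≤ |r - z| + |r - round r| := by
      have := abs_sub_abs_le_abs_sub ((z:ℝ) - r) ((round r : ℝ) - r)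
      calc |(z:ℝ) - round r| = |((z:ℝ) - r) - ((round r : ℝ) - r)| := by ring_nf
        _ ≤ |(z:ℝ) - r| + |(round r:ℝ) - r| := abs_sub _ _
        _ = |r - z| + |r - round r| := by rw [abs_sub_comm ((z:ℝ)) r, abs_sub_comm ((round r:ℝ)) r]
    have h3 : |r - round r| ≤ 1/2 := by simpa [one_div] using abs_sub_round r
    have : (1:ℝ) - 1/2 ≤ |r - z| := by linarith
    calc gg r ≤ 1/2 := gg_le_half r
      _ ≤ |r - z| := by linarith

lemma gg_intCast (z : ℤ) : gg (z : ℝ) = 0 := by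
  have h := gg_le (z : ℝ) z
  simp at h
  exact le_antisymm h (gg_nonneg _)

lemma gg_abs_le (r : ℝ) : gg r ≤ |r| := by simpa using gg_le r 0

lemma gg_add_int (r : ℝ) (z : ℤ) : gg (r + z) = gg r := by
  apply le_antisymm
  · have h := gg_le (r + (z:ℝ)) (round r + z)
    rwa [show r + (z:ℝ) - ((round r + z : ℤ):ℝ) = r - round r by push_cast; ring] at h
  · have h := gg_le r (round (r + (z:ℝ)) - z)
    rwa [show r - ((round (r + (z:ℝ)) - z : ℤ):ℝ) = r + z - round (r + (z:ℝ)) by push_cast; ring] at h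

lemma gg_neg (r : ℝ) : gg (-r) = gg r := by
  apply le_antisymm
  · have h := gg_le (-r) (-(round r))
    calc gg (-r) ≤ |(-r) - ((-(round r) : ℤ):ℝ)| := h
      _ = |r - round r| := by rw [show (-r) - ((-(round r) : ℤ):ℝ) = -(r - round r) by push_cast; ring, abs_neg]
      _ = gg r := rfl
  · have h := gg_le r (-(round (-r)))
    calc gg r ≤ |r - ((-(round (-r)) : ℤ):ℝ)| := h
      _ = |(-r) - round (-r)| := by rw [show r - ((-(round (-r)) : ℤ):ℝ) = -((-r) - round (-r)) by push_cast; ring, abs_neg]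
      _ = gg (-r) := rfl

lemma gg_add_le (r s : ℝ) : gg (r + s) ≤ gg r + gg s := by
  calc gg (r + s) ≤ |(r+s) - (round r + round s : ℤ)| := gg_le _ _
    _ = |(r - round r) + (s - round s)| := by push_cast; ring_nf
    _ ≤ |r - round r| + |s - round s| := abs_add_le _ _
    _ = gg r + gg s := rfl

lemma gg_eq_abs {r : ℝ} (h : |r| ≤ 1/2) : gg r = |r| := by
  refine le_antisymm (gg_abs_le r) ?_
  rcases eq_or_ne (round r) 0 with h0 | h0
  · simp [gg, h0]
  · have h1 : (1:ℝ) ≤ |(round r : ℝ)| := by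
      have : (1:ℤ) ≤ |round r| := Int.one_le_abs h0
      exact_mod_cast this
    have h3 : |r - round r| ≤ 1/2 := by simpa [one_div] using abs_sub_round r
    have : |(round r : ℝ)| ≤ |r - round r| + |r| := by
      calc |(round r:ℝ)| = |r - (r - round r)| := by ring_nf
        _ ≤ |r| + |r - round r| := by
            have := abs_sub (r) (r - round r); linarith [abs_sub_abs_le_abs_sub r (r - round r)]
        _ = |r - round r| + |r| := by ring
    have : |r| = 1/2 := le_antisymm h (by linarith)
    rw [this]; unfold gg at h3 ⊢; linarith

lemma gg_int_mul_le (j : ℤ) (r : ℝ) : gg (j * r) ≤ |(j:ℝ)| * gg r := by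
  calc gg (j * r) ≤ |j * r - (j * round r : ℤ)| := gg_le _ _
    _ = |(j:ℝ)| * |r - round r| := by push_cast; rw [← abs_mul]; ring_nf
    _ = |(j:ℝ)| * gg r := rfl

-- the "multiples" lemma
lemma gg_small {m : ℕ} (hm : 1 ≤ m) {β : ℝ}
    (h : ∀ j : ℕ, 1 ≤ j → j ≤ m → gg (j * β) ≤ 1/4) : gg β ≤ 1/(2*m) := by
  by_contra hc
  push_neg at hc
  have hmpos : (0:ℝ) < m := by exact_mod_cast hm
  have hη4 : gg β ≤ 1/4 := by simpa using h 1 le_rfl hm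
  have hηpos : 0 < gg β := lt_trans (by positivity) hc
  -- minimal j with 1/4 < j * gg β
  have hP : ∃ j, 1/4 < (j:ℝ) * gg β ∧ j ≤ m := by
    refine ⟨m, ?_, le_rfl⟩
    have : 1/(2*(m:ℝ)) * m < gg β * m := by
      apply mul_lt_mul_of_pos_right hc hmpos
    have h2 : 1/(2*(m:ℝ)) * m = 1/2 := by field_simp
    nlinarith
  classical
  set P : ℕ → Prop := fun j => 1/4 < (j:ℝ) * gg β with hPdef
  have hPm : P m := by
    obtain ⟨j, hj1, hj2⟩ := hP
    have : (j:ℝ) * gg β ≤ (m:ℝ) * gg β := by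
      apply mul_le_mul_of_nonneg_right _ (le_of_lt hηpos)
      exact_mod_cast hj2
    exact lt_of_lt_of_le hj1 this
  have hex : ∃ j, P j := ⟨m, hPm⟩
  set j := Nat.find hex with hjdef
  have hPj : P j := Nat.find_spec hex
  have hjm : j ≤ m := Nat.find_le hPm
  have hj2 : 2 ≤ j := by
    by_contra hj1
    push_neg at hj1
    interval_cases j
    · simp [P] at hPj; nlinarith [hPj]
    · simp [P] at hPj; nlinarith [hPj]
  have hprev : ¬ P (j - 1) := Nat.find_min hex (by omega)
  have hprev' : ((j:ℝ) - 1) * gg β ≤ 1/4 := by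
    have : ¬ (1/4 < ((j-1 : ℕ):ℝ) * gg β) := hprev
    push_neg at this
    have hcast : (((j-1:ℕ)):ℝ) = (j:ℝ) - 1 := by
      have : (1:ℕ) ≤ j := by omega
      push_cast [Nat.cast_sub this]; ring
    rwa [hcast] at this
  have hhalf : (j:ℝ) * gg β ≤ 1/2 := by nlinarith
  -- now compute gg (j * β)
  have h1 : (j:ℝ) * β = (j:ℝ) * (β - round β) + ((j * round β : ℤ) : ℝ) := by push_cast; ring
  have habs : |(j:ℝ) * (β - round β)| = (j:ℝ) * gg β := by
    rw [abs_mul, abs_of_nonneg (show (0:ℝ) ≤ (j:ℝ) by positivity)]; unfold gg; rfl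
  have hkey : gg ((j:ℝ) * β) = (j:ℝ) * gg β := by
    rw [h1, gg_add_int, gg_eq_abs (by rw [habs]; exact hhalf), habs]
  have := h j (by omega) hjm
  rw [hkey] at this
  exact absurd this (not_le.mpr hPj)

lemma gg_eq_zero_of_forall {β : ℝ} (h : ∀ j : ℕ, 1 ≤ j → gg (j * β) ≤ 1/4) : gg β = 0 := by
  have hle : ∀ m : ℕ, 1 ≤ m → gg β ≤ 1/(2*m) := fun m hm => gg_small hm (fun j h1 h2 => h j h1)
  by_contra hc
  have hpos : 0 < gg β := lt_of_le_of_ne (gg_nonneg β) (Ne.symm hc)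
  obtain ⟨m, hm⟩ := exists_nat_gt (1/(2 * gg β))
  have hm1 : 1 ≤ m := by
    have hp0 : (0:ℝ) < 1/(2*gg β) := by positivity
    have h2 : (0:ℝ) < m := lt_trans hp0 hm
    have : (0:ℕ) < m := by exact_mod_cast h2
    omega
  have := hle m hm1
  have hmpos : (0:ℝ) < m := by exact_mod_cast hm1
  rw [div_lt_iff₀ (by positivity)] at hm
  rw [le_div_iff₀ (by positivity)] at this
  nlinarith

lemma eq_round_of_gg_eq_zero {β : ℝ} (h : gg β = 0) : β = round β := by
  have := abs_eq_zero.mp h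
  linarith

def cc (p n : ℕ) : ℕ := p ^ (n*n)
noncomputable def FF (p : ℕ) (x : ℤ) : ℝ := ⨆ n : ℕ, gg ((x : ℝ) / (cc p n))

section FFlems
variable {p : ℕ}

lemma cc_pos (hp : 2 ≤ p) (n : ℕ) : 0 < cc p n := Nat.pow_pos (by omega)
lemma cc_pos' (hp : 2 ≤ p) (n : ℕ) : (0:ℝ) < cc p n := by exact_mod_cast cc_pos hp n
lemma cc_dvd {n k : ℕ} (h : n ≤ k) : cc p n ∣ cc p k :=
  pow_dvd_pow p (Nat.mul_le_mul h h)
lemma cc_succ (n : ℕ) : cc p (n+1) = cc p n * p^(2*n+1) := by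
  rw [cc, cc, ← pow_add]; ring_nf

lemma FF_bdd (x : ℤ) : BddAbove (Set.range fun n => gg ((x:ℝ) / cc p n)) :=
  ⟨1/2, by rintro _ ⟨n, rfl⟩; exact gg_le_half _⟩

lemma FF_ge (x : ℤ) (n : ℕ) : gg ((x:ℝ) / cc p n) ≤ FF p x := le_ciSup (FF_bdd x) n
lemma FF_le {x : ℤ} {a : ℝ} (h : ∀ n, gg ((x:ℝ) / cc p n) ≤ a) : FF p x ≤ a := ciSup_le h
lemma FF_nonneg (x : ℤ) : 0 ≤ FF p x := le_trans (gg_nonneg _) (FF_ge x 0)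
lemma FF_zero : FF p 0 = 0 := by
  refine le_antisymm (FF_le fun n => ?_) (FF_nonneg 0)
  rw [Int.cast_zero, zero_div]
  simp [gg]
lemma FF_add_le (x y : ℤ) : FF p (x + y) ≤ FF p x + FF p y := by
  refine FF_le fun n => ?_
  have h : ((x + y : ℤ):ℝ) / cc p n = (x:ℝ)/cc p n + (y:ℝ)/cc p n := by push_cast; ring
  rw [h]
  exact le_trans (gg_add_le _ _) (add_le_add (FF_ge x n) (FF_ge y n))
lemma FF_neg (x : ℤ) : FF p (-x) = FF p x := by
  unfold FF
  congr 1; funext n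
  rw [show ((-x : ℤ):ℝ)/cc p n = -((x:ℝ)/cc p n) by push_cast; ring, gg_neg]

lemma gg_ge_inv_of_not_dvd {x : ℤ} {C : ℕ} (hC : 0 < C) (h : ¬ ((C:ℤ) ∣ x)) :
    1/(C:ℝ) ≤ gg ((x:ℝ)/C) := by
  have hC' : (0:ℝ) < C := by exact_mod_cast hC
  set z := round ((x:ℝ)/C) with hz
  have hne : x - z * C ≠ 0 := by
    intro hcon
    exact h ⟨z, by linear_combination hcon⟩
  have h1 : (1:ℝ) ≤ |((x - z*C : ℤ):ℝ)| := by
    have h0 := Int.one_le_abs hne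
    calc (1:ℝ) = ((1:ℤ):ℝ) := by norm_num
      _ ≤ ((|x - z*C| : ℤ):ℝ) := by exact_mod_cast h0
      _ = |((x - z*C : ℤ):ℝ)| := by push_cast; ring
  have h2 : gg ((x:ℝ)/C) = |(x:ℝ)/C - z| := rfl
  have h3 : (x:ℝ)/C - z = ((x - z*C : ℤ):ℝ)/C := by push_cast; field_simp
  rw [h2, h3, abs_div, abs_of_pos hC']
  gcongr

lemma FF_lt_dvd (hp : 2 ≤ p) {x : ℤ} {m : ℕ} (h : FF p x < 1/(cc p m : ℝ)) : (p:ℤ)^m ∣ x := by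
  rcases Nat.eq_zero_or_pos m with rfl | hm
  · simp
  by_contra hd
  have hd2 : ¬ ((cc p m : ℤ) ∣ x) := by
    intro hcon
    refine hd (dvd_trans ?_ hcon)
    have h0 : (p:ℤ)^m ∣ (p:ℤ)^(m*m) := pow_dvd_pow _ (Nat.le_mul_of_pos_left m hm)
    simpa [cc] using h0
  have h1 := gg_ge_inv_of_not_dvd (cc_pos hp m) hd2
  have h2 := FF_ge (p := p) x m
  linarith

lemma gg_ge_quarter {r : ℝ} (h1 : 1/4 ≤ r) (h2 : r ≤ 3/4) : 1/4 ≤ gg r := by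
  rcases le_or_gt (round r) 0 with hz | hz
  · have : ((round r : ℤ):ℝ) ≤ 0 := by exact_mod_cast hz
    rw [gg, abs_of_pos (by linarith)]; linarith
  · have : (1:ℝ) ≤ ((round r : ℤ):ℝ) := by exact_mod_cast hz
    rw [gg, abs_of_neg (by linarith)]; linarith

lemma exists_bad (hp : 2 ≤ p) (m : ℕ) : ∃ x : ℤ, (p:ℤ)^m ∣ x ∧ 1/4 ≤ FF p x := by
  set e := m*m + m + 1 with he
  set P := p ^ e with hP
  have hP2 : 2 ≤ P := le_trans hp (Nat.le_self_pow (by omega) p)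
  set s := (P+1)/2 with hs
  have hs1 : P ≤ 2*s := by omega
  have hs2 : 2*s ≤ P + 1 := by omega
  refine ⟨(p:ℤ)^m * s, dvd_mul_right _ _, ?_⟩
  have hcc : cc p (m+1) = p^m * P := by
    rw [cc, hP, ← pow_add]; congr 1; ring
  have hPpos : (0:ℝ) < P := by
    have : 0 < P := by omega
    exact_mod_cast this
  have hppos : (0:ℝ) < (p:ℝ)^m := by
    have : (0:ℝ) < (p:ℝ) := by exact_mod_cast (by omega : 0 < p)
    positivity
  have hxq : (((p:ℤ)^m * s : ℤ):ℝ) / cc p (m+1) = (s:ℝ)/P := by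
    rw [hcc]; push_cast; rw [div_eq_div_iff (by positivity) hPpos.ne']; ring
  refine le_trans ?_ (FF_ge _ (m+1))
  rw [hxq]
  apply gg_ge_quarter
  · have h1 : (P:ℝ) ≤ 2*s := by exact_mod_cast hs1
    rw [le_div_iff₀ hPpos]; linarith
  · have h1 : (2*s:ℝ) ≤ (P:ℝ) + 1 := by exact_mod_cast hs2
    have h2 : (2:ℝ) ≤ P := by exact_mod_cast hP2
    rw [div_le_iff₀ hPpos]; linarith

end FFlems

lemma ratio_le {p : ℕ} (hp : 2 ≤ p) {n k : ℕ} (h : n < k) :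
    (cc p (n+1) : ℝ) / (cc p k : ℝ) ≤ (1/2:ℝ)^(k-1-n) := by
  set a := n + 1 with ha
  have hak : a ≤ k := h
  have he : k - 1 - n = k - a := by omega
  -- natural number inequality
  have hexp : a*a + (k*k - a*a) = k*k := Nat.add_sub_cancel' (Nat.mul_le_mul hak hak)
  have hD : k - a ≤ k*k - a*a := by
    have h1 : k*k - a*a = (k+a)*(k-a) := by
      have := Nat.sq_sub_sq k a
      rw [pow_two, pow_two] at this
      omega
    rw [h1]
    exact Nat.le_mul_of_pos_left _ (by omega)
  have hnat : cc p a * 2^(k-a) ≤ cc p k := by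
    have h1 : cc p k = cc p a * p^(k*k - a*a) := by
      rw [cc, cc, ← pow_add, hexp]
    rw [h1]
    apply Nat.mul_le_mul_left
    calc 2^(k-a) ≤ 2^(k*k - a*a) := Nat.pow_le_pow_right (by omega) hD
      _ ≤ p^(k*k - a*a) := Nat.pow_le_pow_left hp _
  have h2e : (0:ℝ) < 2^(k-a) := by positivity
  rw [he, div_le_iff₀ (cc_pos' hp k), one_div, inv_pow, ← div_eq_inv_mul,
    le_div_iff₀ h2e]
  calc (cc p a : ℝ) * 2^(k-a) = ((cc p a * 2^(k-a) : ℕ) : ℝ) := by push_cast; ring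
    _ ≤ cc p k := by exact_mod_cast hnat

lemma FF_sum_le {p : ℕ} (hp : 2 ≤ p) (N M : ℕ) (t : ℕ → ℤ) {δ : ℝ} (hδ : 0 ≤ δ)
    (hb : ∀ n, |(t n : ℝ)| ≤ δ * (cc p (n+1) : ℝ) / (cc p n : ℝ)) :
    FF p (∑ n ∈ Finset.Ico N M, t n * cc p n) ≤ 2*δ := by
  refine FF_le fun k => ?_
  classical
  set A := (Finset.Ico N M).filter (fun n => n < k) with hA
  set B := (Finset.Ico N M).filter (fun n => ¬ n < k) with hB
  have hsplit : (∑ n ∈ Finset.Ico N M, t n * cc p n)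
      = (∑ n ∈ A, t n * cc p n) + (∑ n ∈ B, t n * cc p n) :=
    (Finset.sum_filter_add_sum_filter_not _ _ _).symm
  have hdvdB : (cc p k : ℤ) ∣ (∑ n ∈ B, t n * cc p n) := by
    apply Finset.dvd_sum
    intro n hn
    have hkn : k ≤ n := by
      simp only [hB, Finset.mem_filter] at hn
      omega
    exact Dvd.dvd.mul_left (by exact_mod_cast cc_dvd hkn) _
  obtain ⟨w, hw⟩ := hdvdB
  have hck : (0:ℝ) < cc p k := cc_pos' hp k
  have hq : ((∑ n ∈ Finset.Ico N M, t n * cc p n : ℤ):ℝ) / cc p k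
      = ((∑ n ∈ A, t n * cc p n : ℤ):ℝ) / cc p k + (w:ℝ) := by
    rw [hsplit, hw]; push_cast; field_simp
  rw [hq, gg_add_int]
  have habs : gg (((∑ n ∈ A, t n * cc p n : ℤ):ℝ) / cc p k)
      ≤ ∑ n ∈ A, |(t n:ℝ)| * cc p n / cc p k := by
    refine le_trans (gg_abs_le _) ?_
    rw [show ((∑ n ∈ A, t n * cc p n : ℤ):ℝ) = ∑ n ∈ A, (t n : ℝ) * cc p n by push_cast; ring,
      Finset.sum_div]
    refine le_trans (Finset.abs_sum_le_sum_abs _ _) (Finset.sum_le_sum fun n _ => ?_)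
    rw [abs_div, abs_of_pos hck, abs_mul, abs_of_pos (cc_pos' hp n)]
  have hterm : ∀ n ∈ A, |(t n:ℝ)| * cc p n / cc p k ≤ δ * (1/2:ℝ)^(k-1-n) := by
    intro n hn
    have hnk : n < k := by
      simp only [hA, Finset.mem_filter] at hn; exact hn.2
    have h1 : |(t n:ℝ)| * cc p n / cc p k ≤ (δ * cc p (n+1) / cc p n) * cc p n / cc p k := by
      gcongr
      exact hb n
    calc |(t n:ℝ)| * cc p n / cc p k ≤ (δ * cc p (n+1) / cc p n) * cc p n / cc p k := h1
      _ = δ * ((cc p (n+1) : ℝ) / cc p k) := by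
          rw [div_mul_cancel₀ _ (cc_pos' hp n).ne', mul_div_assoc]
      _ ≤ δ * (1/2:ℝ)^(k-1-n) := by
          have := ratio_le hp hnk
          exact mul_le_mul_of_nonneg_left this hδ
  have hsum2 : ∑ n ∈ A, δ * (1/2:ℝ)^(k-1-n) ≤ δ * 2 := by
    have hsub : A ⊆ Finset.range k := by
      intro n hn
      simp only [hA, Finset.mem_filter] at hn
      exact Finset.mem_range.mpr hn.2
    have h1 : ∑ n ∈ A, δ * (1/2:ℝ)^(k-1-n) ≤ ∑ n ∈ Finset.range k, δ * (1/2:ℝ)^(k-1-n) :=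
      Finset.sum_le_sum_of_subset_of_nonneg hsub (fun n _ _ => by positivity)
    have h2 : ∑ n ∈ Finset.range k, δ * (1/2:ℝ)^(k-1-n) = δ * ∑ n ∈ Finset.range k, (1/2:ℝ)^(k-1-n) := by
      rw [Finset.mul_sum]
    have h3 : ∑ n ∈ Finset.range k, (1/2:ℝ)^(k-1-n) = ∑ n ∈ Finset.range k, (1/2:ℝ)^n := by
      exact Finset.sum_range_reflect (fun n => (1/2:ℝ)^n) k
    have h4 : ∑ n ∈ Finset.range k, (1/2:ℝ)^n ≤ 2 := by
      simpa using sum_geometric_two_le k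
    calc ∑ n ∈ A, δ * (1/2:ℝ)^(k-1-n) ≤ δ * ∑ n ∈ Finset.range k, (1/2:ℝ)^(k-1-n) := by
          rw [← h2]; exact h1
      _ = δ * ∑ n ∈ Finset.range k, (1/2:ℝ)^n := by rw [h3]
      _ ≤ δ * 2 := mul_le_mul_of_nonneg_left h4 hδ
  calc gg (((∑ n ∈ A, t n * cc p n : ℤ):ℝ) / cc p k) ≤ ∑ n ∈ A, |(t n:ℝ)| * cc p n / cc p k := habs
    _ ≤ ∑ n ∈ A, δ * (1/2:ℝ)^(k-1-n) := Finset.sum_le_sum hterm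
    _ ≤ δ * 2 := hsum2
    _ = 2 * δ := by ring

def rr (p n : ℕ) : ℕ := p^(2*n+1)

lemma dual_f {p : ℕ} (hp : 2 ≤ p) (α : ℝ) {δ : ℝ} (hδ : 0 < δ)
    (H : ∀ x : ℤ, FF p x ≤ 2*δ → gg ((x:ℝ) * α) ≤ 1/4) :
    ∃ (n : ℕ) (a : ℤ), (cc p n : ℝ) * α = (a:ℝ) := by
  classical
  set σ : ℕ → ℝ := fun n => (cc p n : ℝ) * α - (round ((cc p n : ℝ) * α) : ℤ) with hσdef
  set η : ℕ → ℝ := fun n => |σ n| with hηdef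
  have hηgg : ∀ n, η n = gg ((cc p n : ℝ) * α) := fun n => rfl
  have hηhalf : ∀ n, η n ≤ 1/2 := fun n => by rw [hηgg]; exact gg_le_half _
  have hηnonneg : ∀ n, 0 ≤ η n := fun n => abs_nonneg _
  by_cases hA : ∃ n, σ n = 0
  · obtain ⟨n, hn⟩ := hA
    refine ⟨n, round ((cc p n : ℝ) * α), ?_⟩
    have h0 : (cc p n : ℝ) * α - (round ((cc p n : ℝ) * α) : ℤ) = 0 := hn
    linarith
  push_neg at hA
  have hηpos : ∀ n, 0 < η n := fun n => abs_pos.mpr (hA n)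
  exfalso
  have hrr2 : ∀ n, (2:ℝ) ≤ rr p n := by
    intro n
    have h0 : 2 ≤ rr p n := le_trans hp (Nat.le_self_pow (by omega) p)
    exact_mod_cast h0
  have hrrpos : ∀ n, (0:ℝ) < rr p n := fun n => lt_of_lt_of_le (by norm_num) (hrr2 n)
  have hccr : ∀ n, (cc p (n+1) : ℝ) = (cc p n : ℝ) * (rr p n : ℝ) := by
    intro n; rw [cc_succ, Nat.cast_mul]; rfl
  have hratio : ∀ n, (cc p (n+1) : ℝ) / (cc p n : ℝ) = (rr p n : ℝ) := by
    intro n; rw [hccr n, mul_div_cancel_left₀ _ (cc_pos' hp n).ne']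
  set m : ℕ → ℕ := fun n => ⌊δ * rr p n⌋₊ with hmdef
  -- single scale elements have small FF
  have hsingle : ∀ (n : ℕ) (j : ℤ), |(j:ℝ)| ≤ δ * rr p n → FF p (j * cc p n) ≤ 2*δ := by
    intro n j hj
    have h0 := FF_sum_le hp n (n+1) (fun i => if i = n then j else 0) hδ.le (fun i => by
      beta_reduce
      by_cases hi : i = n
      · subst hi
        rw [if_pos rfl, mul_div_assoc, hratio i]
        exact hj
      · rw [if_neg hi]
        norm_num
        positivity)
    simpa [Nat.Ico_succ_singleton] using h0
  -- eta bound at scales where m n ≥ 1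
  have hηle : ∀ n, 1 ≤ m n → η n ≤ 1/(2 * m n) := by
    intro n hm
    rw [hηgg]
    apply gg_small hm
    intro j h1 hj
    have hb : |(((j:ℤ)):ℝ)| ≤ δ * rr p n := by
      rw [show (((j:ℤ)):ℝ) = (j:ℝ) by push_cast; ring,
        abs_of_nonneg (by positivity : (0:ℝ) ≤ (j:ℝ))]
      calc (j:ℝ) ≤ (m n : ℝ) := by exact_mod_cast hj
        _ ≤ δ * rr p n := Nat.floor_le (by positivity)
    have h2 := H ((j:ℤ) * cc p n) (hsingle n (j:ℤ) hb)
    rw [show (((j:ℤ) * cc p n : ℤ):ℝ) * α = (j:ℝ) * ((cc p n : ℝ) * α) by push_cast; ring] at h2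
    exact h2
  -- dichotomy
  have hdich : ∀ n, η n < 1/(4 * rr p n) → σ (n+1) = (rr p n : ℝ) * σ n := by
    intro n hn
    set d : ℤ := round ((cc p (n+1) : ℝ) * α) - (rr p n : ℤ) * round ((cc p n : ℝ) * α) with hd
    have e : (cc p (n+1) : ℝ) * α = (rr p n : ℝ) * ((cc p n : ℝ) * α) := by
      rw [hccr n]; ring
    have hkey : σ (n+1) - (rr p n : ℝ) * σ n = -(d:ℝ) := by
      simp only [hσdef, hd]
      push_cast
      linear_combination e
    have hdsmall : |(d:ℝ)| < 1 := by
      have h1 : |σ (n+1) - (rr p n : ℝ) * σ n| ≤ η (n+1) + rr p n * η n := by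
        calc |σ (n+1) - (rr p n : ℝ) * σ n| ≤ |σ (n+1)| + |(rr p n : ℝ) * σ n| := abs_sub _ _
          _ = η (n+1) + rr p n * η n := by
              rw [abs_mul, abs_of_pos (hrrpos n)]
      have h2 : (rr p n : ℝ) * η n < 1/4 := by
        have h3 := mul_lt_mul_of_pos_left hn (hrrpos n)
        calc (rr p n : ℝ) * η n < rr p n * (1/(4 * rr p n)) := h3
          _ = 1/4 := by
              rw [mul_one_div, div_eq_div_iff (mul_pos (by norm_num : (0:ℝ) < 4) (hrrpos n)).ne'
                (by norm_num : (4:ℝ) ≠ 0)]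
              ring
      have h3 : η (n+1) ≤ 1/2 := hηhalf _
      rw [← abs_neg, ← hkey]
      calc |σ (n+1) - (rr p n : ℝ) * σ n| ≤ η (n+1) + rr p n * η n := h1
        _ < 1 := by linarith
    have hd0 : d = 0 := by
      have h4 : |d| < 1 := by exact_mod_cast hdsmall
      have h5 := Int.abs_lt_one_iff.mp h4
      exact h5
    have h5 := hkey
    rw [hd0] at h5
    push_cast at h5
    linarith
  -- escape: large eta occurs beyond every N
  have hesc : ∀ N : ℕ, ∃ n, N ≤ n ∧ 1/(4 * rr p n) ≤ η n := by
    intro N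
    by_contra hcon
    push_neg at hcon
    have hgrow : ∀ k : ℕ, 2^k * η N ≤ η (N + k) := by
      intro k
      induction k with
      | zero => simp
      | succ k ih =>
        have hsmall := hcon (N + k) (by omega)
        have hstep := hdich (N + k) hsmall
        have heq : η (N + (k+1)) = (rr p (N+k) : ℝ) * η (N + k) := by
          have h6 : N + (k+1) = (N + k) + 1 := by omega
          rw [h6]
          show |σ ((N+k)+1)| = _
          rw [hstep, abs_mul, abs_of_pos (hrrpos _)]
        rw [heq]
        calc (2:ℝ)^(k+1) * η N = 2 * (2^k * η N) := by ring
          _ ≤ 2 * η (N + k) := by linarith [hηnonneg (N+k), ih]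
          _ ≤ (rr p (N+k) : ℝ) * η (N + k) :=
              mul_le_mul_of_nonneg_right (hrr2 _) (hηnonneg _)
    obtain ⟨k, hk⟩ := pow_unbounded_of_one_lt (1/(2 * η N)) (by norm_num : (1:ℝ) < 2)
    have h1 : 1/2 < 2^k * η N := by
      rw [div_lt_iff₀ (mul_pos (by norm_num : (0:ℝ) < 2) (hηpos N))] at hk
      nlinarith [hηpos N]
    have h7 := hgrow k
    have h8 := hηhalf (N + k)
    linarith
  -- threshold
  obtain ⟨N₁, hN₁⟩ := exists_nat_gt (4/δ)
  have hn_le_rr : ∀ n : ℕ, n ≤ rr p n := by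
    intro n
    calc n ≤ 2^n := Nat.le_of_lt (Nat.lt_two_pow_self)
      _ ≤ 2^(2*n+1) := Nat.pow_le_pow_right (by omega) (by omega)
      _ ≤ p^(2*n+1) := Nat.pow_le_pow_left hp _
  have hbig : ∀ n, N₁ ≤ n → 4 < δ * rr p n := by
    intro n hn
    have h1 : (N₁:ℝ) ≤ rr p n := by
      calc (N₁:ℝ) ≤ (n:ℝ) := by exact_mod_cast hn
        _ ≤ rr p n := by exact_mod_cast hn_le_rr n
    have h2 : 4/δ < (rr p n : ℝ) := lt_of_lt_of_le hN₁ h1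
    rw [div_lt_iff₀ hδ] at h2
    linarith
  have hm3 : ∀ n, N₁ ≤ n → 3 ≤ m n := by
    intro n hn
    apply Nat.le_floor
    have h9 := hbig n hn
    push_cast
    linarith
  have hmge : ∀ n, δ * rr p n - 1 ≤ m n := by
    intro n
    have h10 := Nat.lt_floor_add_one (δ * rr p n)
    have h11 : (⌊δ * rr p n⌋₊ : ℝ) = ((m n : ℕ) : ℝ) := rfl
    linarith
  have hη6 : ∀ n, N₁ ≤ n → η n ≤ 1/6 := by
    intro n hn
    have h3 := hm3 n hn
    have h12 := hηle n (by omega)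
    have h1 : (3:ℝ) ≤ m n := by exact_mod_cast h3
    calc η n ≤ 1/(2 * m n) := h12
      _ ≤ 1/6 := one_div_le_one_div_of_le (by norm_num) (by linarith)
  set ρ : ℝ := δ/8 with hρdef
  have hρpos : 0 < ρ := by positivity
  have hreach : ∀ n, N₁ ≤ n → 1/(4 * rr p n) ≤ η n → ρ ≤ (m n : ℝ) * η n := by
    intro n hn hη
    have h4 := hbig n hn
    have hm := hmge n
    have hr := hrrpos n
    have hmnn : (0:ℝ) ≤ (m n : ℝ) := by positivity
    have key : (δ * rr p n - 1) * (1/(4 * rr p n)) ≤ (m n : ℝ) * η n :=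
      mul_le_mul hm hη (by positivity) hmnn
    have expand : (δ * rr p n - 1) * (1/(4 * rr p n)) = δ/4 - 1/(4 * rr p n) := by
      field_simp
    have hsm : 1/(4 * rr p n) ≤ δ/16 := by
      rw [div_le_div_iff₀ (by positivity) (by norm_num)]
      nlinarith
    rw [expand] at key
    rw [hρdef]
    linarith
  -- greedy construction
  have greedy : ∀ J : ℕ, ∀ N : ℕ, N₁ ≤ N → ∃ (M : ℕ) (t : ℕ → ℤ) (S : ℝ),
      N ≤ M ∧ (∀ n, t n ≠ 0 → N ≤ n ∧ n < M) ∧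
      (∀ n, |(t n : ℝ)| ≤ δ * (cc p (n+1) : ℝ) / (cc p n : ℝ)) ∧
      S = ∑ n ∈ Finset.Ico N M, (t n : ℝ) * σ n ∧
      0 ≤ S ∧ S ≤ 1/2 ∧ (1/4 < S ∨ (S ≤ 1/4 ∧ (J:ℝ) * ρ ≤ S)) := by
    intro J
    induction J with
    | zero =>
      intro N hN
      refine ⟨N, 0, 0, le_rfl, ?_, ?_, by simp, le_rfl, by norm_num,
        Or.inr ⟨by norm_num, by norm_num⟩⟩
      · intro n hn; exact absurd rfl hn
      · intro n; norm_num; positivity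
    | succ J ih =>
      intro N hN
      obtain ⟨M, t, S, hNM, hsupp, hbound, hSsum, hS0, hS2, hdisj⟩ := ih N hN
      rcases hdisj with hgt | ⟨hle4, hJρ⟩
      · exact ⟨M, t, S, hNM, hsupp, hbound, hSsum, hS0, hS2, Or.inl hgt⟩
      · obtain ⟨n, hnM, hnlarge⟩ := hesc M
        have hnN₁ : N₁ ≤ n := le_trans (le_trans hN hNM) hnM
        have hη0 := hηpos n
        have hη6' := hη6 n hnN₁
        set half : ℝ := (1/2 - S)/η n with hhalf
        have hhalf0 : 0 ≤ half := by
          rw [hhalf]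
          apply div_nonneg (by linarith) (hηnonneg n)
        set k : ℕ := min (m n) ⌊half⌋₊ with hk
        set sgn : ℤ := if 0 < σ n then 1 else -1 with hsgn
        set t' : ℕ → ℤ := fun i => if i = n then (k:ℤ) * sgn else t i with ht'
        have hsgnσ : (sgn:ℝ) * σ n = η n := by
          rcases lt_trichotomy (σ n) 0 with hneg | hzero | hpos
          · rw [hsgn, if_neg (not_lt.mpr (le_of_lt hneg))]
            simp only [hηdef]
            rw [abs_of_neg hneg]
            push_cast
            ring
          · exact absurd hzero (hA n)
          · rw [hsgn, if_pos hpos]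
            simp only [hηdef]
            rw [abs_of_pos hpos]
            push_cast
            ring
        set S' : ℝ := S + (k:ℝ) * η n with hS'
        have hkfloor : (k:ℝ) * η n ≤ 1/2 - S := by
          have h1 : (k:ℝ) ≤ (⌊half⌋₊ : ℝ) := by exact_mod_cast min_le_right _ _
          have h2 : (⌊half⌋₊:ℝ) ≤ half := Nat.floor_le hhalf0
          calc (k:ℝ) * η n ≤ half * η n :=
                mul_le_mul_of_nonneg_right (le_trans h1 h2) (hηnonneg n)
            _ = 1/2 - S := by rw [hhalf, div_mul_cancel₀ _ (ne_of_gt hη0)]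
        have hS'le : S' ≤ 1/2 := by rw [hS']; linarith
        have hS'0 : 0 ≤ S' := by
          rw [hS']
          have h13 : (0:ℝ) ≤ (k:ℝ) * η n := by positivity
          linarith
        have hsum' : S' = ∑ i ∈ Finset.Ico N (n+1), (t' i : ℝ) * σ i := by
          rw [← Finset.sum_Ico_consecutive _ hNM (by omega : M ≤ n+1)]
          have e1 : ∑ i ∈ Finset.Ico N M, (t' i : ℝ) * σ i = S := by
            rw [hSsum]
            apply Finset.sum_congr rfl
            intro i hi
            have h14 : i < M := (Finset.mem_Ico.mp hi).2
            have hin : i ≠ n := by omega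
            simp only [ht']
            simp [hin]
          have e2 : ∑ i ∈ Finset.Ico M (n+1), (t' i : ℝ) * σ i = (k:ℝ) * η n := by
            rw [Finset.sum_eq_single_of_mem n (Finset.mem_Ico.mpr ⟨hnM, by omega⟩)]
            · simp only [ht', if_true]
              push_cast
              rw [mul_assoc, hsgnσ]
            · intro i hi hin
              simp only [ht']
              rw [if_neg hin]
              have h15 : t i = 0 := by
                by_contra hne
                have h16 := (hsupp i hne).2
                have h17 := (Finset.mem_Ico.mp hi).1
                omega
              rw [h15]
              norm_num
          rw [e1, e2, hS']
        have hbound' : ∀ i, |(t' i : ℝ)| ≤ δ * (cc p (i+1) : ℝ) / (cc p i : ℝ) := by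
          intro i
          by_cases hi : i = n
          · subst hi
            rw [mul_div_assoc, hratio i]
            simp only [ht', if_true]
            have hs1 : sgn = 1 ∨ sgn = -1 := by
              rw [hsgn]; split_ifs <;> simp
            have h1 : |(((k:ℤ) * sgn : ℤ):ℝ)| = (k:ℝ) := by
              rcases hs1 with h | h <;> rw [h] <;> push_cast <;> simp [abs_mul]
            rw [h1]
            calc (k:ℝ) ≤ ((m i : ℕ):ℝ) := by exact_mod_cast min_le_left _ _
              _ ≤ δ * rr p i := Nat.floor_le (by positivity)
          · simp only [ht']
            rw [if_neg hi]
            exact hbound i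
        have hsupp' : ∀ i, t' i ≠ 0 → N ≤ i ∧ i < n+1 := by
          intro i hne
          by_cases hi : i = n
          · subst hi; exact ⟨le_trans hNM hnM, by omega⟩
          · simp only [ht'] at hne
            rw [if_neg hi] at hne
            have h18 := hsupp i hne
            omega
        refine ⟨n+1, t', S', by omega, hsupp', hbound', hsum', hS'0, hS'le, ?_⟩
        rcases le_or_gt (m n) ⌊half⌋₊ with hcase | hcase
        · have hkm : k = m n := min_eq_left hcase
          have hreach' := hreach n hnN₁ hnlarge
          have hS'big : ((J:ℝ)+1) * ρ ≤ S' := by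
            rw [hS', hkm]
            have h19 : (J:ℝ) * ρ ≤ S := hJρ
            nlinarith
          by_cases hq : S' ≤ 1/4
          · refine Or.inr ⟨hq, ?_⟩
            push_cast
            linarith
          · exact Or.inl (by linarith)
        · have hkm : k = ⌊half⌋₊ := min_eq_right (le_of_lt hcase)
          have hfl : half - 1 < (⌊half⌋₊:ℝ) := Nat.sub_one_lt_floor half
          have hgt : 1/4 < S' := by
            rw [hS', hkm]
            have h1 : (half - 1) * η n < (⌊half⌋₊:ℝ) * η n :=
              mul_lt_mul_of_pos_right hfl hη0
            have h2 : (half - 1) * η n = (1/2 - S) - η n := by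
              rw [sub_mul, one_mul, hhalf, div_mul_cancel₀ _ (ne_of_gt hη0)]
            linarith [hη6']
          exact Or.inl hgt
  -- conclude
  obtain ⟨J, hJ⟩ := exists_nat_gt (1/(4*ρ))
  have hJρ : 1/4 < (J:ℝ) * ρ := by
    rw [div_lt_iff₀ (by positivity : (0:ℝ) < 4*ρ)] at hJ
    nlinarith
  obtain ⟨M, t, S, hNM, hsupp, hbound, hSsum, hS0, hS2, hdisj⟩ := greedy J N₁ le_rfl
  have hSgt : 1/4 < S := by
    rcases hdisj with h | ⟨h1, h2⟩
    · exact h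
    · linarith
  have hFFx : FF p (∑ n ∈ Finset.Ico N₁ M, t n * cc p n) ≤ 2*δ :=
    FF_sum_le hp N₁ M t hδ.le hbound
  have hggx := H _ hFFx
  have hxα : ((∑ n ∈ Finset.Ico N₁ M, t n * cc p n : ℤ):ℝ) * α
      = S + ((∑ n ∈ Finset.Ico N₁ M, t n * round ((cc p n:ℝ) * α) : ℤ):ℝ) := by
    rw [hSsum]
    push_cast
    rw [Finset.sum_mul, ← Finset.sum_add_distrib]
    apply Finset.sum_congr rfl
    intro i _
    simp only [hσdef]
    push_cast
    ring
  rw [hxα, gg_add_int] at hggx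
  have hfin : gg S = S := by
    rw [gg_eq_abs (by rw [abs_of_nonneg hS0]; exact hS2), abs_of_nonneg hS0]
  rw [hfin] at hggx
  linarith

-- half of FF is positive on nonzero
lemma FF_pos {p : ℕ} (hp : 2 ≤ p) {x : ℤ} (hx : x ≠ 0) : 0 < FF p x := by
  set q := x.natAbs with hq
  have hq1 : 1 ≤ q := by omega
  set n := 2*q with hn
  have hcc : 2*q < cc p n := by
    calc 2*q = n := rfl
      _ < 2^n := Nat.lt_two_pow_self
      _ ≤ 2^(n*n) := Nat.pow_le_pow_right (by omega) (Nat.le_mul_of_pos_left n (by omega))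
      _ ≤ p^(n*n) := Nat.pow_le_pow_left hp _
  have hccR : 2*(q:ℝ) < cc p n := by exact_mod_cast hcc
  have hxq : |(x:ℝ)| = (q:ℝ) := by
    rw [hq, Nat.cast_natAbs]
    push_cast
    rfl
  have habs : |(x:ℝ)/cc p n| ≤ 1/2 := by
    rw [abs_div, abs_of_pos (cc_pos' hp n), hxq, div_le_iff₀ (cc_pos' hp n)]
    linarith
  have hgg : gg ((x:ℝ)/cc p n) = |(x:ℝ)/cc p n| := gg_eq_abs habs
  have hpos : 0 < |(x:ℝ)/cc p n| := by
    apply abs_pos.mpr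
    apply div_ne_zero _ (cc_pos' hp n).ne'
    exact_mod_cast hx
  calc (0:ℝ) < |(x:ℝ)/cc p n| := hpos
    _ = gg ((x:ℝ)/cc p n) := hgg.symm
    _ ≤ FF p x := FF_ge x n

-- type synonym carrying the new topology
def Zt (p : ℕ) : Type := ℤ

instance (p : ℕ) : AddCommGroup (Zt p) := inferInstanceAs (AddCommGroup ℤ)

noncomputable instance ZtMetric (p : ℕ) [hf : Fact (2 ≤ p)] : MetricSpace (Zt p) where
  dist x y := FF p ((x : ℤ) - (y : ℤ))
  dist_self x := by show FF p _ = 0; exact (congrArg (FF p) (sub_self (x:ℤ))).trans FF_zero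
  dist_comm x y := by
    show FF p _ = FF p _
    exact (congrArg (FF p) (show ((x:ℤ) - (y:ℤ) : ℤ) = -((y:ℤ) - (x:ℤ)) by abel)).trans (FF_neg _)
  dist_triangle x y z := by
    show FF p _ ≤ FF p _ + FF p _
    calc FF p ((x:ℤ) - z) = FF p (((x:ℤ) - y) + ((y:ℤ) - z)) := by congr 1; abel
      _ ≤ _ := FF_add_le _ _
  eq_of_dist_eq_zero := by
    intro x y h
    have h0 : FF p ((x:ℤ) - y) = 0 := h
    by_contra hne
    have : (x:ℤ) - y ≠ 0 := sub_ne_zero.mpr hne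
    exact absurd h0 (ne_of_gt (FF_pos hf.out this))

lemma Zt.dist_eq {p : ℕ} [Fact (2 ≤ p)] (x y : Zt p) : dist x y = FF p ((x:ℤ) - (y:ℤ)) := rfl

def toZt (p : ℕ) : ℤ → Zt p := id
def ofZt (p : ℕ) : Zt p → ℤ := id

instance ZtGroup (p : ℕ) [hf : Fact (2 ≤ p)] : IsTopologicalAddGroup (Zt p) where
  continuous_add := by
    rw [Metric.continuous_iff]
    rintro ⟨a, b⟩ ε hε
    refine ⟨ε/2, by positivity, ?_⟩
    rintro ⟨x, y⟩ h
    rw [Prod.dist_eq] at h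
    have h1 : dist x a < ε/2 := lt_of_le_of_lt (le_max_left _ _) h
    have h2 : dist y b < ε/2 := lt_of_le_of_lt (le_max_right _ _) h
    have key : dist (x + y) (a + b) ≤ dist x a + dist y b := by
      rw [Zt.dist_eq, Zt.dist_eq, Zt.dist_eq]
      calc FF p ((x + y : Zt p) - (a + b : Zt p)) 
          = FF p (((x:ℤ) - a) + ((y:ℤ) - b)) := by congr 1; abel
        _ ≤ _ := FF_add_le _ _
    calc dist (x + y) (a + b) ≤ dist x a + dist y b := key
      _ < ε := by linarith
  continuous_neg := by
    rw [Metric.continuous_iff]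
    intro a ε hε
    refine ⟨ε, hε, ?_⟩
    intro x h
    have key : dist (-x) (-a) = dist x a := by
      rw [Zt.dist_eq, Zt.dist_eq]
      exact (congrArg (FF p) (show ((-x : Zt p):ℤ) - ((-a : Zt p):ℤ) = -((x:ℤ) - a) by abel)).trans
        (FF_neg _)
    rwa [key]

example (p : ℕ) [Fact (2 ≤ p)] : TopologicalSpace.MetrizableSpace (Zt p) := inferInstance

lemma L_lift (y : ℝ) :
    (∃ r : ℝ, |r| ≤ 1/4 ∧ (r : AddCircle (1:ℝ)) = (y : AddCircle (1:ℝ))) ↔ gg y ≤ 1/4 := by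
  constructor
  · rintro ⟨r, hr, he⟩
    have hmem : r - y ∈ AddSubgroup.zmultiples (1:ℝ) := QuotientAddGroup.eq_iff_sub_mem.mp he
    obtain ⟨z, hz⟩ := AddSubgroup.mem_zmultiples_iff.mp hmem
    rw [zsmul_eq_mul, mul_one] at hz
    have hy : y = r + (-z : ℤ) := by push_cast; linarith
    rw [hy, gg_add_int]
    exact le_trans (gg_abs_le r) hr
  · intro h
    refine ⟨y - round y, by rwa [← gg], ?_⟩
    apply (QuotientAddGroup.eq_iff_sub_mem).mpr
    apply AddSubgroup.mem_zmultiples_iff.mpr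
    exact ⟨-round y, by rw [zsmul_eq_mul, mul_one]; push_cast; ring⟩

lemma L_norm (y : ℝ) : ‖((y:ℝ) : AddCircle (1:ℝ))‖ = gg y := UnitAddCircle.norm_eq

lemma L_rep (χ : ℤ →+ AddCircle (1:ℝ)) :
    ∃ α : ℝ, ∀ k : ℤ, χ k = ((k * α : ℝ) : AddCircle (1:ℝ)) := by
  obtain ⟨α, hα⟩ := QuotientAddGroup.mk_surjective (χ 1)
  refine ⟨α, fun k => ?_⟩
  have h1 : χ k = k • χ 1 := by
    rw [← map_zsmul χ k 1, smul_eq_mul, mul_one]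
  have h2 : (α : AddCircle (1:ℝ)) = χ 1 := hα
  rw [h1, ← h2, ← zsmul_eq_mul]
  rfl

section Theorem
variable {p : ℕ}

-- lambda-continuity from the explicit form
lemma contLin_of_form (hp : 2 ≤ p) (tLin : TopologicalSpace ℤ)
    (hLing : @IsTopologicalAddGroup ℤ tLin _)
    (hLinb : (@nhds ℤ tLin 0).HasBasis (fun _ : ℕ => True) (fun n => {x : ℤ | ((p : ℤ) ^ n) ∣ x}))
    (χ : ℤ →+ AddCircle (1 : ℝ)) (a : ℤ) (n : ℕ)
    (hform : ∀ k : ℤ, χ k = ((a * k / (p ^ n : ℝ) : ℝ) : AddCircle (1 : ℝ))) :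
    @Continuous ℤ (AddCircle (1 : ℝ)) tLin _ χ := by
  letI := tLin
  haveI := hLing
  apply continuous_of_continuousAt_zero χ
  unfold ContinuousAt
  rw [map_zero]
  intro W hW
  rw [Filter.mem_map]
  refine Filter.mem_of_superset (hLinb.mem_of_mem (i := n) trivial) ?_
  rintro x ⟨y, rfl⟩
  have h1 : χ ((p:ℤ)^n * y) = 0 := by
    rw [hform]
    have h2 : ((a : ℝ) * ((p:ℤ)^n * y : ℤ) / (p^n : ℝ) : ℝ) = ((a * y : ℤ) : ℝ) := by
      push_cast
      field_simp
    rw [h2]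
    apply (QuotientAddGroup.eq_zero_iff _).mpr
    apply AddSubgroup.mem_zmultiples_iff.mpr
    exact ⟨a * y, by rw [zsmul_eq_mul, mul_one]⟩
  show χ ((p:ℤ)^n * y) ∈ W
  rw [h1]
  exact mem_of_mem_nhds hW

-- form from lambda-continuity
lemma form_of_contLin (hp : 2 ≤ p) (tLin : TopologicalSpace ℤ)
    (hLing : @IsTopologicalAddGroup ℤ tLin _)
    (hLinb : (@nhds ℤ tLin 0).HasBasis (fun _ : ℕ => True) (fun n => {x : ℤ | ((p : ℤ) ^ n) ∣ x}))
    (χ : ℤ →+ AddCircle (1 : ℝ))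
    (hχ : @Continuous ℤ (AddCircle (1 : ℝ)) tLin _ χ) :
    ∃ (a : ℤ) (n : ℕ), ∀ k : ℤ, χ k = ((a * k / (p ^ n : ℝ) : ℝ) : AddCircle (1 : ℝ)) := by
  letI := tLin
  haveI := hLing
  obtain ⟨α, hαk⟩ := L_rep χ
  have ht := hχ.tendsto 0
  rw [map_zero] at ht
  have hW := ht (Metric.ball_mem_nhds (0 : AddCircle (1:ℝ)) (by norm_num : (0:ℝ) < 1/5))
  rw [Filter.mem_map, hLinb.mem_iff] at hW
  obtain ⟨n, -, hsub⟩ := hW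
  set β : ℝ := (p:ℝ)^n * α with hβ
  have hall : ∀ j : ℕ, 1 ≤ j → gg ((j:ℝ) * β) ≤ 1/4 := by
    intro j hj
    have hx : ((p:ℤ)^n * (j:ℤ)) ∈ {x : ℤ | ((p : ℤ) ^ n) ∣ x} := ⟨(j:ℤ), rfl⟩
    have hmem := hsub hx
    simp only [Set.mem_preimage, Metric.mem_ball, dist_zero_right] at hmem
    rw [hαk, L_norm] at hmem
    have hcast : (((p:ℤ)^n * (j:ℤ) : ℤ):ℝ) * α = (j:ℝ) * β := by
      rw [hβ]; push_cast; ring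
    rw [hcast] at hmem
    linarith
  have hg0 := gg_eq_zero_of_forall hall
  have hβint := eq_round_of_gg_eq_zero hg0
  have hpn : (0:ℝ) < (p:ℝ)^n := by
    have : (0:ℝ) < (p:ℝ) := by exact_mod_cast (by omega : 0 < p)
    positivity
  refine ⟨round β, n, fun k => ?_⟩
  rw [hαk k]
  congr 1
  have hα : α = (round β : ℝ) / (p:ℝ)^n := by
    rw [eq_div_iff hpn.ne']
    rw [hβ] at hβint
    linarith
  rw [hα]
  push_cast
  ring

-- form from tau-continuity
lemma form_of_contTau [hf : Fact (2 ≤ p)]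
    (χ : ℤ →+ AddCircle (1 : ℝ))
    (hχ : Continuous (fun z : Zt p => χ (ofZt p z))) :
    ∃ (a : ℤ) (n : ℕ), ∀ k : ℤ, χ k = ((a * k / (p ^ n : ℝ) : ℝ) : AddCircle (1 : ℝ)) := by
  have hp : 2 ≤ p := hf.out
  obtain ⟨α, hαk⟩ := L_rep χ
  have ht : Filter.Tendsto (fun z : Zt p => χ (ofZt p z)) (nhds (0 : Zt p)) (nhds 0) := by
    have h0 := hχ.tendsto (0 : Zt p)
    rwa [show χ (ofZt p (0 : Zt p)) = 0 from map_zero χ] at h0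
  obtain ⟨δ, hδ0, hd⟩ := Metric.tendsto_nhds_nhds.mp ht (1/4) (by norm_num)
  have H : ∀ x : ℤ, FF p x ≤ 2*(δ/4) → gg ((x:ℝ) * α) ≤ 1/4 := by
    intro x hx
    have h1 : dist (toZt p x) (0 : Zt p) < δ := by
      rw [show dist (toZt p x) (0 : Zt p) = FF p (x - 0) from rfl, sub_zero]
      linarith
    have h2 : dist (χ x) 0 < 1/4 := hd h1
    rw [dist_zero_right, hαk, L_norm] at h2
    linarith
  obtain ⟨n, a, hna⟩ := dual_f hp α (by positivity : (0:ℝ) < δ/4) H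
  refine ⟨a, n*n, fun k => ?_⟩
  rw [hαk k]
  congr 1
  have hpn : (0:ℝ) < (p:ℝ)^(n*n) := by
    have : (0:ℝ) < (p:ℝ) := by exact_mod_cast (by omega : 0 < p)
    positivity
  have hccR : (cc p n : ℝ) = (p:ℝ)^(n*n) := by rw [cc]; push_cast; ring
  have hα : α = (a:ℝ) / (p:ℝ)^(n*n) := by
    rw [eq_div_iff hpn.ne', ← hccR]
    linarith [hna]
  rw [hα]
  ring

end Theorem

noncomputable def sQ (p m : ℕ) : Set ℤ :=
  {x : ℤ | ∀ (n : ℕ) (j : ℤ), |j| ≤ (m:ℤ) → gg (((j * x : ℤ):ℝ) / cc p n) ≤ 1/4}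

lemma Zt.dist_zero {p : ℕ} [Fact (2 ≤ p)] (x : Zt p) : dist x (0 : Zt p) = FF p (ofZt p x) := by
  rw [show dist x (0 : Zt p) = FF p (ofZt p x - 0) from rfl, sub_zero]

lemma hasBasis_sQ (p : ℕ) [hf : Fact (2 ≤ p)] :
    (nhds (0 : Zt p)).HasBasis (fun m : ℕ => 0 < m) (fun m => (sQ p m : Set (Zt p))) := by
  have hp := hf.out
  refine Filter.hasBasis_iff.mpr ?_
  intro U
  constructor
  · intro hU
    obtain ⟨ε, hε, hball⟩ := Metric.mem_nhds_iff.mp hU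
    obtain ⟨m₀, hm₀⟩ := exists_nat_gt (1/ε)
    refine ⟨m₀ + 1, Nat.succ_pos _, subset_trans ?_ hball⟩
    intro x hx
    rw [Metric.mem_ball]
    have hm1 : (1:ℝ) ≤ (m₀:ℝ) + 1 := by
      have := Nat.cast_nonneg (α := ℝ) m₀
      linarith
    have hFF : FF p (ofZt p x) ≤ 1/(2*(m₀+1 : ℕ)) := by
      refine FF_le fun n => ?_
      apply gg_small (show 1 ≤ m₀+1 by omega)
      intro j h1 hj
      have hjx := hx n (j:ℤ) (by exact_mod_cast hj)
      show gg ((j:ℝ) * ((ofZt p x : ℝ) / cc p n)) ≤ 1/4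
      rw [show (j:ℝ) * ((ofZt p x : ℝ) / cc p n) = (((j:ℤ) * ofZt p x : ℤ):ℝ) / cc p n
        by push_cast; ring]
      exact hjx
    have hlt : 1/(2*((m₀+1:ℕ):ℝ)) < ε := by
      have h2 : 1/ε < ((m₀+1:ℕ):ℝ) := by push_cast; linarith
      rw [div_lt_iff₀ hε] at h2
      rw [div_lt_iff₀ (by positivity : (0:ℝ) < 2*((m₀+1:ℕ):ℝ))]
      nlinarith
    calc dist x 0 = FF p (ofZt p x) := Zt.dist_zero x
      _ ≤ 1/(2*(m₀+1 : ℕ)) := hFF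
      _ < ε := hlt
  · rintro ⟨m, hm, hsub⟩
    have hmR : (0:ℝ) < m := by exact_mod_cast hm
    refine Filter.mem_of_superset
      (Metric.ball_mem_nhds (0:Zt p) (show (0:ℝ) < 1/(4*m) by positivity)) (subset_trans ?_ hsub)
    intro y hy
    have hd : FF p (ofZt p y) < 1/(4*m) := by
      rw [← Zt.dist_zero y]
      exact Metric.mem_ball.mp hy
    intro n j hj
    show gg (((j * ofZt p y : ℤ):ℝ) / (cc p n : ℝ)) ≤ 1/4
    rw [show ((j * ofZt p y : ℤ):ℝ) / (cc p n : ℝ) = (j:ℝ) * ((ofZt p y : ℝ) / cc p n)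
      by push_cast; ring]
    calc gg ((j:ℝ) * ((ofZt p y : ℝ) / cc p n)) ≤ |(j:ℝ)| * gg ((ofZt p y : ℝ) / cc p n) :=
        gg_int_mul_le j _
      _ ≤ (m:ℝ) * FF p (ofZt p y) := by
          apply mul_le_mul (by exact_mod_cast hj) (FF_ge _ n) (gg_nonneg _) hmR.le
      _ ≤ (m:ℝ) * (1/(4*m)) := by nlinarith
      _ = 1/4 := by field_simp
      _ ≤ 1/4 := le_rfl

lemma sQ_eq (p : ℕ) [hf : Fact (2 ≤ p)] (m : ℕ) (hm : 0 < m) :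
    sQ p m = {x : ℤ | ∀ χ : ℤ →+ AddCircle (1 : ℝ),
      Continuous (fun z : Zt p => χ (ofZt p z)) →
      (∀ u ∈ sQ p m, ∃ r : ℝ, |r| ≤ 1 / 4 ∧ (r : AddCircle (1 : ℝ)) = χ u) →
      ∃ r : ℝ, |r| ≤ 1 / 4 ∧ (r : AddCircle (1 : ℝ)) = χ x} := by
  have hp := hf.out
  ext x
  constructor
  · intro hx χ _ hlift
    exact hlift x hx
  · intro hx
    by_contra hxs
    simp only [sQ, Set.mem_setOf_eq, not_forall] at hxs
    obtain ⟨n, j, hj, hgt⟩ := hxs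
    push_neg at hgt
    set χ : ℤ →+ AddCircle (1:ℝ) :=
      zmultiplesHom (AddCircle (1:ℝ)) (((j:ℝ)/(cc p n : ℝ) : ℝ) : AddCircle (1:ℝ)) with hχdef
    have χapp : ∀ k : ℤ, χ k = ((k * ((j:ℝ)/(cc p n:ℝ)) : ℝ) : AddCircle (1:ℝ)) := by
      intro k
      rw [hχdef, zmultiplesHom_apply, ← zsmul_eq_mul]
      rfl
    have hcast : ∀ k : ℤ, (k : ℝ) * ((j:ℝ)/(cc p n:ℝ)) = ((j * k : ℤ):ℝ) / cc p n := by
      intro k; push_cast; ring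
    have hcont : Continuous (fun z : Zt p => χ (ofZt p z)) := by
      rw [Metric.continuous_iff]
      intro b ε hε
      refine ⟨ε/((m:ℝ)+1), by positivity, ?_⟩
      intro a hab
      have h1 : dist (χ (ofZt p a)) (χ (ofZt p b)) = ‖χ (ofZt p a - ofZt p b)‖ := by
        rw [dist_eq_norm, ← map_sub]
      have h2 : ‖χ (ofZt p a - ofZt p b)‖
          = gg (((j * (ofZt p a - ofZt p b) : ℤ):ℝ) / cc p n) := by
        rw [χapp, hcast, L_norm]
      have h3 : gg (((j * (ofZt p a - ofZt p b) : ℤ):ℝ) / cc p n)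
          ≤ |(j:ℝ)| * gg (((ofZt p a - ofZt p b : ℤ):ℝ) / cc p n) := by
        rw [show (((j * (ofZt p a - ofZt p b) : ℤ):ℝ)) / cc p n
          = (j:ℝ) * (((ofZt p a - ofZt p b : ℤ):ℝ) / cc p n) by push_cast; ring]
        exact gg_int_mul_le j _
      have h4 : |(j:ℝ)| ≤ (m:ℝ) := by exact_mod_cast hj
      have h5 : gg (((ofZt p a - ofZt p b : ℤ):ℝ) / cc p n) ≤ FF p (ofZt p a - ofZt p b) :=
        FF_ge _ n
      have h6 : FF p (ofZt p a - ofZt p b) = dist a b := rfl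
      have h7 : dist a b < ε/((m:ℝ)+1) := hab
      have hmpos : (0:ℝ) ≤ (m:ℝ) := by positivity
      calc dist (χ (ofZt p a)) (χ (ofZt p b))
          ≤ |(j:ℝ)| * gg (((ofZt p a - ofZt p b : ℤ):ℝ) / cc p n) := by rw [h1, h2]; exact h3
        _ ≤ (m:ℝ) * (ε/((m:ℝ)+1)) := by
            apply mul_le_mul h4 (by linarith [h5, h6.le, h6.ge, h7]) (gg_nonneg _) hmpos
        _ < ε := by
            rw [mul_div_assoc']
            rw [div_lt_iff₀ (by positivity : (0:ℝ) < (m:ℝ)+1)]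
            nlinarith
    have hlift : ∀ u ∈ sQ p m, ∃ r : ℝ, |r| ≤ 1 / 4 ∧ (r : AddCircle (1 : ℝ)) = χ u := by
      intro u hu
      rw [χapp u, hcast u]
      exact (L_lift _).mpr (hu n j hj)
    obtain ⟨r, hr, hre⟩ := hx χ hcont hlift
    rw [χapp x, hcast x] at hre
    exact absurd ((L_lift _).mp ⟨r, hr, hre⟩) (not_le.mpr hgt)


theorem stmt_19 (p : ℕ) (hp : p.Prime)
    (tLin : TopologicalSpace ℤ) (hLing : @IsTopologicalAddGroup ℤ tLin _)
    (hLinb : (@nhds ℤ tLin 0).HasBasis (fun _ : ℕ => True) (fun n => {x : ℤ | ((p : ℤ) ^ n) ∣ x})) :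
    ∃ tTau : TopologicalSpace ℤ,
      @IsTopologicalAddGroup ℤ tTau _ ∧
      @TopologicalSpace.MetrizableSpace ℤ tTau ∧
      -- locally quasi-convex: a neighborhood basis at 0 of quasi-convex sets
      (∃ (ι : Type) (pb : ι → Prop) (s : ι → Set ℤ),
        (@nhds ℤ tTau 0).HasBasis pb s ∧
        ∀ i, pb i → s i = {x : ℤ | ∀ χ : ℤ →+ AddCircle (1 : ℝ),
          @Continuous ℤ (AddCircle (1 : ℝ)) tTau _ χ →
          (∀ u ∈ s i, ∃ r : ℝ, |r| ≤ 1 / 4 ∧ (r : AddCircle (1 : ℝ)) = χ u) →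
          ∃ r : ℝ, |r| ≤ 1 / 4 ∧ (r : AddCircle (1 : ℝ)) = χ x}) ∧
      -- strictly finer than the p-adic topology
      tTau ≤ tLin ∧ tTau ≠ tLin ∧
      -- same continuous characters
      (∀ χ : ℤ →+ AddCircle (1 : ℝ),
        @Continuous ℤ (AddCircle (1 : ℝ)) tTau _ χ ↔ @Continuous ℤ (AddCircle (1 : ℝ)) tLin _ χ) ∧
      -- the characters are k ↦ a k / p^n + ℤ
      (∀ χ : ℤ →+ AddCircle (1 : ℝ),
        @Continuous ℤ (AddCircle (1 : ℝ)) tLin _ χ ↔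
          ∃ (a : ℤ) (n : ℕ), ∀ k : ℤ,
            χ k = ((a * k / (p ^ n : ℝ) : ℝ) : AddCircle (1 : ℝ))) := by
  haveI hf : Fact (2 ≤ p) := ⟨hp.two_le⟩
  have hp2 : 2 ≤ p := hp.two_le
  have hle : (inferInstanceAs (TopologicalSpace (Zt p)) : TopologicalSpace ℤ) ≤ tLin := by
    have key0 : @nhds ℤ (inferInstanceAs (TopologicalSpace (Zt p))) 0 ≤ @nhds ℤ tLin 0 := by
      intro U hU
      rw [hLinb.mem_iff] at hU
      obtain ⟨n, -, hsub⟩ := hU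
      refine Filter.mem_of_superset ?_ hsub
      show {x : ℤ | ((p : ℤ) ^ n) ∣ x} ∈ nhds (0 : Zt p)
      refine Filter.mem_of_superset
        (Metric.ball_mem_nhds (0:Zt p) (show (0:ℝ) < 1/(cc p n)
          from one_div_pos.mpr (cc_pos' hp2 n))) ?_
      intro y hy
      show ((p : ℤ) ^ n) ∣ ofZt p y
      apply FF_lt_dvd hp2
      rw [← Zt.dist_zero y]
      exact Metric.mem_ball.mp hy
    refine @le_of_nhds_le_nhds ℤ (inferInstanceAs (TopologicalSpace (Zt p))) tLin ?_
    intro x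
    have trans_tau : @nhds ℤ (inferInstanceAs (TopologicalSpace (Zt p))) x
        = Filter.map (fun y : ℤ => x + y)
          (@nhds ℤ (inferInstanceAs (TopologicalSpace (Zt p))) 0) :=
      (map_add_left_nhds_zero (toZt p x)).symm
    have trans_lin : @nhds ℤ tLin x = Filter.map (fun y : ℤ => x + y) (@nhds ℤ tLin 0) := by
      letI := tLin
      haveI := hLing
      exact (map_add_left_nhds_zero x).symm
    refine (le_of_eq trans_tau).trans ?_; rw [trans_lin]
    exact Filter.map_mono key0
  refine ⟨(inferInstanceAs (TopologicalSpace (Zt p))), ?_, ?_, ?_, hle, ?_, ?_, ?_⟩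
  · exact inferInstanceAs (IsTopologicalAddGroup (Zt p))
  · exact inferInstanceAs (TopologicalSpace.MetrizableSpace (Zt p))
  · refine ⟨ℕ, (fun m : ℕ => 0 < m), sQ p, ?_, ?_⟩
    · exact hasBasis_sQ p
    · intro m hm
      exact sQ_eq p m hm
  · -- not equal
    intro heq
    have hball : Metric.ball (0 : Zt p) (1/4) ∈ nhds (0 : Zt p) :=
      Metric.ball_mem_nhds _ (by norm_num)
    have hball' : Metric.ball (0 : Zt p) (1/4)
        ∈ @nhds ℤ (inferInstanceAs (TopologicalSpace (Zt p))) 0 := hball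
    replace hball' : Metric.ball (0 : Zt p) (1/4) ∈ @nhds ℤ tLin 0 := by rw [← heq]; exact hball'
    replace hball' := hLinb.mem_iff.mp hball'
    obtain ⟨n, -, hsub⟩ := hball'
    obtain ⟨x, hdvd, hFF⟩ := exists_bad hp2 n
    have hx := hsub hdvd
    have hlt : FF p x < 1/4 := by
      rw [← sub_zero x, show FF p (x - 0) = dist (toZt p x) (0 : Zt p) from rfl]
      exact Metric.mem_ball.mp hx
    linarith
  · -- same characters
    intro χ
    constructor
    · intro hχ
      obtain ⟨a, n, hform⟩ := form_of_contTau (p := p) χ hχ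
      exact contLin_of_form hp2 tLin hLing hLinb χ a n hform
    · intro hχ
      exact continuous_le_dom hle hχ
  · -- characterization of lambda-continuous characters
    intro χ
    constructor
    · intro hχ
      exact form_of_contLin hp2 tLin hLing hLinb χ hχ
    · rintro ⟨a, n, hform⟩
      exact contLin_of_form hp2 tLin hLing hLinb χ a n hform
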